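/- Let k ⊆ ℂ be a subfield with algebraic closure k̄ ⊆ ℂ, and α ∈ ℂⁿ. Then the closure Z(α, k̄) of α in the k̄-Zariski topology coincides with the unique irreducible component of the closure Z(α, k) of α in the k-Zariski topology that contains α. -/
import Mathlib


/-- The zero locus in `ℂⁿ` of a set of polynomials with coefficients in a
subfield `F ⊆ ℂ`. -/
def zeroLocus (F : Subfield ℂ) (n : ℕ) (I : Set (MvPolynomial (Fin n) F)) :
    Set (Fin n → ℂ) :=
  {z | ∀ f ∈ I, MvPolynomial.aeval z f = 0}

/-- (3.1.2.)  Let `k ⊆ ℂ` be a subfield with algebraic closure `k̄ ⊆ ℂ` and `α ∈ ℂⁿ`.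
Let `𝔭_α ⊆ k[x]` be the ideal of polynomials over `k` vanishing at `α`, so that
`Z(α,k)` is its zero locus, whose irreducible components correspond to the minimal
primes of the extension `𝔭_α·k̄[x]`.  Then the vanishing ideal of `α` over `k̄` is
such a minimal prime, and its zero locus `Z(α,k̄)` coincides with the zero locus of
any minimal prime containing `α` in its zero locus: `Z(α,k̄)` is the unique
irreducible component of `Z(α,k)` containing `α`. -/
theorem stmt_11 (k kbar : Subfield ℂ) (hle : k ≤ kbar)
    (halg : ∀ z : ℂ, z ∈ kbar ↔ IsAlgebraic k z)
    (n : ℕ) (α : Fin n → ℂ) :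
    letI Ik : Ideal (MvPolynomial (Fin n) k) :=
      RingHom.ker ((MvPolynomial.aeval α : MvPolynomial (Fin n) k →ₐ[k] ℂ) :
        MvPolynomial (Fin n) k →+* ℂ)
    letI Ikbar : Ideal (MvPolynomial (Fin n) kbar) :=
      RingHom.ker ((MvPolynomial.aeval α : MvPolynomial (Fin n) kbar →ₐ[kbar] ℂ) :
        MvPolynomial (Fin n) kbar →+* ℂ)
    letI E : Ideal (MvPolynomial (Fin n) kbar) :=
      Ideal.map (MvPolynomial.map (Subfield.inclusion hle)) Ik
    Ikbar ∈ E.minimalPrimes ∧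
    α ∈ zeroLocus kbar n Ikbar ∧
    ∀ P ∈ E.minimalPrimes, α ∈ zeroLocus kbar n P →
      zeroLocus kbar n P = zeroLocus kbar n Ikbar := by
  set Ik : Ideal (MvPolynomial (Fin n) k) :=
    RingHom.ker ((MvPolynomial.aeval α : MvPolynomial (Fin n) k →ₐ[k] ℂ) :
      MvPolynomial (Fin n) k →+* ℂ) with hIk
  set Ikbar : Ideal (MvPolynomial (Fin n) kbar) :=
    RingHom.ker ((MvPolynomial.aeval α : MvPolynomial (Fin n) kbar →ₐ[kbar] ℂ) :
      MvPolynomial (Fin n) kbar →+* ℂ) with hIkbar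
  set E : Ideal (MvPolynomial (Fin n) kbar) :=
    Ideal.map (MvPolynomial.map (Subfield.inclusion hle)) Ik with hE
  set φ : MvPolynomial (Fin n) k →+* MvPolynomial (Fin n) kbar :=
    (MvPolynomial.map (Subfield.inclusion hle) :
      MvPolynomial (Fin n) k →+* MvPolynomial (Fin n) kbar) with hφ
  -- aeval over kbar composed with φ is aeval over k
  have haev : ∀ p : MvPolynomial (Fin n) k,
      (MvPolynomial.aeval α : MvPolynomial (Fin n) kbar →ₐ[kbar] ℂ) (φ p)
        = (MvPolynomial.aeval α : MvPolynomial (Fin n) k →ₐ[k] ℂ) p := by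
    intro p
    show MvPolynomial.eval₂ (algebraMap kbar ℂ) α
        (MvPolynomial.map (Subfield.inclusion hle) p) = _
    rw [MvPolynomial.eval₂_map]
    have h : (algebraMap kbar ℂ).comp (Subfield.inclusion hle) = algebraMap k ℂ :=
      RingHom.ext fun x => rfl
    rw [h]
    rfl
  -- every element of kbar[x] is integral over k[x] (via φ)
  have hint : ∀ q : MvPolynomial (Fin n) kbar, φ.IsIntegralElem q := by
    intro q
    induction q using MvPolynomial.induction_on with
    | C c =>
      have hc : IsIntegral k (c : ℂ) := by
        have := (halg (c : ℂ)).mp c.2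
        exact this.isIntegral
      obtain ⟨p, pmonic, hp⟩ := hc
      refine ⟨p.map (MvPolynomial.C : k →+* MvPolynomial (Fin n) k),
        pmonic.map _, ?_⟩
      rw [Polynomial.eval₂_map]
      have hcomp : φ.comp (MvPolynomial.C : k →+* MvPolynomial (Fin n) k)
          = (MvPolynomial.C : kbar →+* MvPolynomial (Fin n) kbar).comp
            (Subfield.inclusion hle) := RingHom.ext fun x => by
        simp [hφ]
      rw [hcomp, ← Polynomial.hom_eval₂]
      have h0 : Polynomial.eval₂ ((Subfield.inclusion hle)) c p = 0 := by
        have hinj : Function.Injective (kbar.subtype : kbar →+* ℂ) :=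
          Subtype.val_injective
        apply hinj
        rw [map_zero, Polynomial.hom_eval₂]
        have : (kbar.subtype).comp ((Subfield.inclusion hle))
            = algebraMap k ℂ := by ext x; rfl
        rw [this]
        exact hp
      rw [h0, map_zero]
    | add p q hp hq => exact hp.add _ hq
    | mul_X p i hp =>
      have hX : φ.IsIntegralElem (MvPolynomial.X i) := by
        have : (MvPolynomial.X i : MvPolynomial (Fin n) kbar)
            = φ (MvPolynomial.X i) := by simp [hφ]
        rw [this]
        exact φ.isIntegralElem_map
      exact hp.mul _ hX
  letI : Algebra (MvPolynomial (Fin n) k) (MvPolynomial (Fin n) kbar) := φ.toAlgebra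
  have halgmap : algebraMap (MvPolynomial (Fin n) k) (MvPolynomial (Fin n) kbar) = φ := rfl
  -- Ikbar is prime
  have hIkbarPrime : Ikbar.IsPrime := RingHom.ker_isPrime _
  -- E ≤ Ikbar
  have hcomapIkbar : Ideal.comap φ Ikbar = Ik := by
    ext p
    simp only [hIk, hIkbar, Ideal.mem_comap, RingHom.mem_ker, RingHom.coe_coe, haev]
  have hEle : E ≤ Ikbar := by
    rw [Ideal.map_le_iff_le_comap, hcomapIkbar]
  -- minimality
  have hmin : Ikbar ∈ E.minimalPrimes := by
    constructor
    · exact ⟨hIkbarPrime, hEle⟩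
    · rintro P ⟨hPprime, hEP⟩ hPle
      by_contra hne
      have hlt : P < Ikbar := lt_of_le_of_ne hPle (by
        intro h; exact hne (le_of_eq h.symm))
      obtain ⟨x, hxI, hxP⟩ := SetLike.exists_of_lt hlt
      have := Ideal.comap_lt_comap_of_integral_mem_sdiff (I := P) (J := Ikbar)
        hPle ⟨hxI, hxP⟩ (hint x)
      rw [halgmap, hcomapIkbar] at this
      have hPcomap : Ik ≤ Ideal.comap φ P := by
        rw [← Ideal.map_le_iff_le_comap]; exact hEP
      exact lt_irrefl _ (lt_of_le_of_lt hPcomap this)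
  refine ⟨hmin, ?_, ?_⟩
  · intro f hf
    exact hf
  · intro P hP hPzero
    have hPle : P ≤ Ikbar := fun f hf => hPzero f hf
    have hle2 : Ikbar ≤ P := hmin.2 ⟨hP.1.1, hP.1.2⟩ hPle
    rw [le_antisymm hPle hle2]
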